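/- The number of gap-free partitions of n (partitions in which every positive integer less than the largest part occurs as a part) equals the number of partitions of n into distinct parts; equivalently, the generating function for gap-free partitions is (-q;q)_∞. -/

import Mathlib

open Multiset Finset Filter

namespace GapFreeAux

/-- number of parts `≥ i`. -/
def csig (i : ℕ) (s : Multiset ℕ) : ℕ := s.countP (fun a => i ≤ a)

lemma csig_zero (i : ℕ) : csig i 0 = 0 := rfl

lemma csig_cons (i a : ℕ) (s : Multiset ℕ) :
    csig i (a ::ₘ s) = csig i s + if i ≤ a then 1 else 0 := by
  simp [csig, Multiset.countP_cons]

lemma csig_anti {i j : ℕ} (h : i ≤ j) (s : Multiset ℕ) : csig j s ≤ csig i s := by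
  induction s using Multiset.induction with
  | empty => simp [csig_zero]
  | cons a s ih => rw [csig_cons, csig_cons]; split_ifs <;> omega

lemma csig_count (v : ℕ) (s : Multiset ℕ) : csig v s = s.count v + csig (v+1) s := by
  induction s using Multiset.induction with
  | empty => simp [csig_zero]
  | cons a s ih =>
    rw [csig_cons, csig_cons, Multiset.count_cons]
    split_ifs <;> omega

lemma csig_pos_iff {i : ℕ} {s : Multiset ℕ} : 0 < csig i s ↔ ∃ a ∈ s, i ≤ a := by
  simp [csig, Multiset.countP_pos]

lemma csig_pos_of_le_sup {j : ℕ} {s : Multiset ℕ} (h1 : 1 ≤ j) (h2 : j ≤ s.sup) :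
    0 < csig j s := by
  rcases Nat.eq_zero_or_pos (csig j s) with h | h
  · exfalso
    have : ∀ a ∈ s, a ≤ j - 1 := by
      intro a ha
      by_contra hc
      have : 0 < csig j s := csig_pos_iff.2 ⟨a, ha, by omega⟩
      omega
    have := Multiset.sup_le.2 this
    omega
  · exact h

lemma le_sup_of_csig_pos {j : ℕ} {s : Multiset ℕ} (h : 0 < csig j s) : j ≤ s.sup := by
  obtain ⟨a, ha, hja⟩ := csig_pos_iff.1 h
  exact le_trans hja (Multiset.le_sup ha)

/-- The conjugate partition (as a multiset). -/
def conjM (s : Multiset ℕ) : Multiset ℕ :=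
  (Finset.Ico 1 (s.sup + 1)).val.map (fun j => csig j s)

lemma csig_conjM (i : ℕ) (s : Multiset ℕ) :
    csig i (conjM s) = ((Finset.Ico 1 (s.sup + 1)).filter (fun j => i ≤ csig j s)).card := by
  rw [conjM, csig, Multiset.countP_map]
  rfl

lemma mem_conjM {x : ℕ} {s : Multiset ℕ} :
    x ∈ conjM s ↔ ∃ j, (1 ≤ j ∧ j ≤ s.sup) ∧ csig j s = x := by
  simp [conjM, Finset.mem_Ico, Nat.lt_succ_iff]

lemma conjM_pos {s : Multiset ℕ} {x : ℕ} (hx : x ∈ conjM s) : 0 < x := by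
  obtain ⟨j, ⟨hj1, hj2⟩, rfl⟩ := mem_conjM.1 hx
  exact csig_pos_of_le_sup hj1 hj2

lemma key {v j : ℕ} (hv : 1 ≤ v) (hj : 1 ≤ j) (s : Multiset ℕ) :
    v ≤ csig j (conjM s) ↔ j ≤ csig v s := by
  rw [csig_conjM]
  constructor
  · intro h
    by_contra hc
    push_neg at hc
    have hsub : (Finset.Ico 1 (s.sup + 1)).filter (fun i => j ≤ csig i s) ⊆ Finset.Ico 1 v := by
      intro i hi
      rw [Finset.mem_filter, Finset.mem_Ico] at hi
      rw [Finset.mem_Ico]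
      refine ⟨hi.1.1, ?_⟩
      by_contra hiv
      push_neg at hiv
      have := csig_anti hiv s
      omega
    have := Finset.card_le_card hsub
    rw [Nat.card_Ico] at this
    omega
  · intro h
    have hvsup : v ≤ s.sup := le_sup_of_csig_pos (by omega)
    have hsub : Finset.Ico 1 (v + 1) ⊆
        (Finset.Ico 1 (s.sup + 1)).filter (fun i => j ≤ csig i s) := by
      intro i hi
      rw [Finset.mem_Ico] at hi
      rw [Finset.mem_filter, Finset.mem_Ico]
      have h1 : i ≤ v := by omega
      exact ⟨⟨hi.1, by omega⟩, le_trans h (csig_anti h1 s)⟩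
    have := Finset.card_le_card hsub
    rw [Nat.card_Ico] at this
    omega

lemma csig_one_eq_card {s : Multiset ℕ} (hpos : ∀ a ∈ s, 0 < a) : csig 1 s = Multiset.card s := by
  rw [csig, Multiset.countP_eq_card]
  intro a ha
  exact hpos a ha

lemma sup_conjM {s : Multiset ℕ} (hs : s ≠ 0) (hpos : ∀ a ∈ s, 0 < a) :
    (conjM s).sup = csig 1 s := by
  apply le_antisymm
  · apply Multiset.sup_le.2
    intro b hb
    obtain ⟨j, ⟨hj1, hj2⟩, rfl⟩ := mem_conjM.1 hb
    exact csig_anti hj1 s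
  · apply Multiset.le_sup
    rw [mem_conjM]
    obtain ⟨a, ha⟩ := Multiset.exists_mem_of_ne_zero hs
    exact ⟨1, ⟨le_refl _, le_trans (hpos a ha) (Multiset.le_sup ha)⟩, rfl⟩

lemma csig_conjM_conjM {s : Multiset ℕ} (hpos : ∀ a ∈ s, 0 < a) {v : ℕ} (hv : 1 ≤ v) :
    csig v (conjM (conjM s)) = csig v s := by
  rcases eq_or_ne s 0 with rfl | hs
  · simp [conjM, csig_zero]
  · rw [csig_conjM]
    have hsup : (conjM s).sup = csig 1 s := sup_conjM hs hpos
    have hle : csig v s ≤ csig 1 s := csig_anti hv s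
    have : (Finset.Ico 1 ((conjM s).sup + 1)).filter (fun j => v ≤ csig j (conjM s)) =
        Finset.Ico 1 (csig v s + 1) := by
      ext j
      rw [Finset.mem_filter, Finset.mem_Ico, Finset.mem_Ico, hsup]
      constructor
      · rintro ⟨⟨hj1, hj2⟩, hj3⟩
        exact ⟨hj1, by have := (key hv hj1 s).1 hj3; omega⟩
      · rintro ⟨hj1, hj2⟩
        exact ⟨⟨hj1, by omega⟩, (key hv hj1 s).2 (by omega)⟩
    rw [this, Nat.card_Ico]
    omega

lemma conjM_conjM {s : Multiset ℕ} (hpos : ∀ a ∈ s, 0 < a) : conjM (conjM s) = s := by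
  ext v
  rcases Nat.eq_zero_or_pos v with rfl | hv
  · rw [Multiset.count_eq_zero_of_notMem, Multiset.count_eq_zero_of_notMem]
    · intro h; exact absurd (hpos 0 h) (by omega)
    · intro h; exact absurd (conjM_pos h) (by omega)
  · have h1 := csig_count v (conjM (conjM s))
    have h2 := csig_count v s
    have e1 := csig_conjM_conjM hpos (v := v) hv
    have e2 := csig_conjM_conjM hpos (v := v + 1) (by omega)
    omega

lemma sum_csig (N : ℕ) (s : Multiset ℕ) (h : ∀ a ∈ s, a ≤ N) :
    ∑ j ∈ Finset.Ico 1 (N + 1), csig j s = s.sum := by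
  induction s using Multiset.induction with
  | empty => simp [csig_zero]
  | cons a s ih =>
    have ha : a ≤ N := h a (Multiset.mem_cons_self a s)
    have ihs := ih (fun b hb => h b (Multiset.mem_cons_of_mem hb))
    simp only [csig_cons, Finset.sum_add_distrib, ihs, Multiset.sum_cons]
    have hb : ∑ j ∈ Finset.Ico 1 (N + 1), (if j ≤ a then 1 else 0) = a := by
      rw [Finset.sum_boole]
      have : (Finset.Ico 1 (N + 1)).filter (fun j => j ≤ a) = Finset.Ico 1 (a + 1) := by
        ext j
        simp only [Finset.mem_filter, Finset.mem_Ico]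
        omega
      rw [this]
      simp [Nat.card_Ico]
    rw [hb]
    omega

lemma conjM_sum (s : Multiset ℕ) : (conjM s).sum = s.sum := by
  have : (conjM s).sum = ∑ j ∈ Finset.Ico 1 (s.sup + 1), csig j s := by
    rw [conjM]; rfl
  rw [this, sum_csig]
  intro a ha
  exact Multiset.le_sup ha

/-- gap-free multiset -/
def GF (s : Multiset ℕ) : Prop := ∀ j, 1 ≤ j → j < s.sup → j ∈ s

lemma nodup_conjM {s : Multiset ℕ} (h : GF s) : (conjM s).Nodup := by
  apply Multiset.Nodup.map_on
  · intro x hx y hy hxy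
    rw [Finset.mem_val, Finset.mem_Ico] at hx hy
    by_contra hne
    have main : ∀ a b : ℕ, 1 ≤ a → a < b → b ≤ s.sup → csig b s < csig a s := by
      intro a b ha hab hbsup
      have hmem : a ∈ s := h a ha (by omega)
      have hcnt : 0 < s.count a := Multiset.count_pos.2 hmem
      have h1 := csig_count a s
      have h2 : csig b s ≤ csig (a+1) s := csig_anti (by omega) s
      omega
    rcases Nat.lt_or_ge x y with hlt | hge
    · have := main x y (by omega) hlt (by omega); omega
    · have hlt : y < x := by omega
      have := main y x (by omega) hlt (by omega); omega
  · exact (Finset.Ico 1 (s.sup + 1)).nodup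

lemma gf_conjM {s : Multiset ℕ} (hn : s.Nodup) (hpos : ∀ a ∈ s, 0 < a) : GF (conjM s) := by
  intro v hv1 hvlt
  rcases eq_or_ne s 0 with rfl | hs
  · simp [conjM] at hvlt
  have hsup : (conjM s).sup = csig 1 s := sup_conjM hs hpos
  rw [hsup] at hvlt
  set A := (Finset.Ico 1 (s.sup + 1)).filter (fun j => v ≤ csig j s) with hA
  have hsup1 : 1 ≤ s.sup := by
    obtain ⟨a, ha⟩ := Multiset.exists_mem_of_ne_zero hs
    exact le_trans (hpos a ha) (Multiset.le_sup ha)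
  have h1A : 1 ∈ A := by
    rw [hA, Finset.mem_filter, Finset.mem_Ico]
    exact ⟨⟨le_refl _, by omega⟩, by omega⟩
  have hAne : A.Nonempty := ⟨1, h1A⟩
  set j := A.max' hAne with hj
  have hjA : j ∈ A := A.max'_mem hAne
  rw [hA, Finset.mem_filter, Finset.mem_Ico] at hjA
  obtain ⟨⟨hj1, hj2⟩, hj3⟩ := hjA
  have hcnt : s.count j ≤ 1 := Multiset.nodup_iff_count_le_one.1 hn j
  have heq : csig j s = v := by
    by_contra hne
    have hgt : v < csig j s := by omega
    have hnext : v ≤ csig (j+1) s := by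
      have := csig_count j s
      omega
    have hj1sup : j + 1 ≤ s.sup := le_sup_of_csig_pos (by omega)
    have : j + 1 ∈ A := by
      rw [hA, Finset.mem_filter, Finset.mem_Ico]
      exact ⟨⟨by omega, by omega⟩, hnext⟩
    have := A.le_max' _ this
    omega
  rw [mem_conjM]
  exact ⟨j, ⟨hj1, by omega⟩, heq⟩


def sigF (t : Finset ℕ) : ℕ := ∑ k ∈ t, (k + 1)

lemma sigF_eq (t : Finset ℕ) : sigF t = (t.val.map (fun k => k + 1)).sum := by
  rfl

lemma map_sub_add {s : Multiset ℕ} (h : ∀ a ∈ s, 0 < a) :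
    (s.map (fun a => a - 1)).map (fun k => k + 1) = s := by
  rw [Multiset.map_map]
  conv_rhs => rw [← Multiset.map_id s]
  apply Multiset.map_congr rfl
  intro a ha
  have := h a ha
  simp only [Function.comp_apply, id_eq]
  omega

/-- distinct partitions of n correspond to finsets with weighted sum n -/
def E2 (n : ℕ) : {π : n.Partition // π.parts.Nodup} ≃ {t : Finset ℕ // sigF t = n} where
  toFun π := ⟨⟨π.1.parts.map (fun a => a - 1), by
      apply Multiset.Nodup.map_on _ π.2
      intro x hx y hy hxy
      have hx1 := π.1.parts_pos hx
      have hy1 := π.1.parts_pos hy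
      omega⟩, by
    rw [sigF_eq]
    show ((π.1.parts.map (fun a => a - 1)).map (fun k => k + 1)).sum = n
    rw [map_sub_add (fun a ha => π.1.parts_pos ha), π.1.parts_sum]⟩
  invFun t := ⟨⟨t.1.val.map (fun k => k + 1), by
      intro i hi
      obtain ⟨k, _, rfl⟩ := Multiset.mem_map.1 hi
      omega, by
    have := t.2
    rw [sigF_eq] at this
    exact this⟩, by
    exact Multiset.Nodup.map (fun a b h => by omega) t.1.nodup⟩
  left_inv π := by
    apply Subtype.ext
    ext1
    show (π.1.parts.map (fun a => a - 1)).map (fun k => k + 1) = π.1.parts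
    exact map_sub_add (fun a ha => π.1.parts_pos ha)
  right_inv t := by
    apply Subtype.ext
    apply Finset.val_injective
    show (t.1.val.map (fun k => k + 1)).map (fun a => a - 1) = t.1.val
    rw [Multiset.map_map]
    simp


lemma finId {R : Type*} [CommSemiring R] (x : R) (s : Finset ℕ) :
    ∏ k ∈ s, (1 + x ^ (k + 1)) = ∑ t ∈ s.powerset, x ^ sigF t := by
  calc ∏ k ∈ s, (1 + x ^ (k + 1)) = ∏ k ∈ s, (x ^ (k + 1) + 1) := by
        refine Finset.prod_congr rfl fun k _ => add_comm _ _
    _ = ∑ t ∈ s.powerset, (∏ i ∈ t, x ^ (i + 1)) * ∏ i ∈ s \ t, 1 :=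
        Finset.prod_add _ _ s
    _ = ∑ t ∈ s.powerset, x ^ sigF t := by
        refine Finset.sum_congr rfl fun t ht => ?_
        rw [Finset.prod_const_one, mul_one, Finset.prod_pow_eq_pow_sum, sigF]

lemma summable_real {r : ℝ} (h0 : 0 ≤ r) (h1 : r < 1) :
    Summable (fun t : Finset ℕ => r ^ sigF t) := by
  have hgeo : Summable (fun k : ℕ => r ^ (k + 1)) := by
    have := (summable_geometric_of_lt_one h0 h1).mul_right r
    simpa [pow_succ] using this
  apply summable_of_sum_le (fun t => pow_nonneg h0 _)
  intro F
  have hsub : F ⊆ (F.sup id).powerset := fun t ht =>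
    Finset.mem_powerset.2 (Finset.le_sup (f := id) ht)
  calc ∑ t ∈ F, r ^ sigF t
      ≤ ∑ t ∈ (F.sup id).powerset, r ^ sigF t :=
        Finset.sum_le_sum_of_subset_of_nonneg hsub (fun t _ _ => pow_nonneg h0 _)
    _ = ∏ k ∈ F.sup id, (1 + r ^ (k + 1)) := (finId r _).symm
    _ ≤ ∏ k ∈ F.sup id, Real.exp (r ^ (k + 1)) := by
        apply Finset.prod_le_prod
        · intro k _
          positivity
        · intro k _
          have := Real.add_one_le_exp (r ^ (k + 1))
          linarith
    _ = Real.exp (∑ k ∈ F.sup id, r ^ (k + 1)) := (Real.exp_sum _ _).symm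
    _ ≤ Real.exp (∑' k : ℕ, r ^ (k + 1)) := by
        apply Real.exp_le_exp.2
        exact Summable.sum_le_tsum _ (fun k _ => pow_nonneg h0 _) hgeo

lemma summable_cpow {q : ℂ} (hq : ‖q‖ < 1) :
    Summable (fun t : Finset ℕ => q ^ sigF t) := by
  apply Summable.of_norm
  simpa [norm_pow] using summable_real (norm_nonneg q) hq

lemma hasProd {q : ℂ} (hq : ‖q‖ < 1) :
    HasProd (fun k : ℕ => 1 + q ^ (k + 1)) (∑' t : Finset ℕ, q ^ sigF t) := by
  have hs := summable_cpow hq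
  have hh : Tendsto (fun F : Finset (Finset ℕ) => ∑ t ∈ F, q ^ sigF t)
      atTop (nhds (∑' t : Finset ℕ, q ^ sigF t)) := hs.hasSum
  have hten : Tendsto (fun s : Finset ℕ => s.powerset) atTop atTop := by
    apply Filter.tendsto_atTop_atTop_of_monotone
    · intro a b hab
      exact Finset.powerset_mono.2 hab
    · intro F
      exact ⟨F.sup id, fun t ht => Finset.mem_powerset.2 (Finset.le_sup (f := id) ht)⟩
  have := hh.comp hten
  refine Filter.Tendsto.congr (fun s => ?_) this
  exact (finId q s).symm


set_option maxHeartbeats 1000000 in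
lemma tsum_eq {q : ℂ} (hq : ‖q‖ < 1) :
    ∑' t : Finset ℕ, q ^ sigF t =
      ∑' n : ℕ, (Nat.card {t : Finset ℕ // sigF t = n} : ℂ) * q ^ n := by
  have hs := summable_cpow hq
  rw [← Equiv.tsum_eq (Equiv.sigmaFiberEquiv sigF) (fun t => q ^ sigF t)]
  have hs2 : Summable (fun p : Σ n : ℕ, {t : Finset ℕ // sigF t = n} =>
      q ^ sigF ((Equiv.sigmaFiberEquiv sigF) p)) :=
    (Equiv.summable_iff (Equiv.sigmaFiberEquiv sigF)).2 hs
  rw [Summable.tsum_sigma hs2]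
  refine tsum_congr fun n => ?_
  have : ∀ c : {t : Finset ℕ // sigF t = n},
      q ^ sigF ((Equiv.sigmaFiberEquiv sigF) ⟨n, c⟩) = q ^ n := by
    rintro ⟨t, ht⟩
    simp [Equiv.sigmaFiberEquiv, ht]
  rw [tsum_congr this, tsum_const, nsmul_eq_mul]


end GapFreeAux

/-- The number of missing integers of a partition: positive integers less than
the largest part which do not occur as a part. -/
def missingCount {n : ℕ} (π : n.Partition) : ℕ :=
  ((Finset.Ico 1 π.parts.sup).filter (fun j => j ∉ π.parts)).card

/-- `Pcount n m` is the number of partitions of `n` with exactly `m` missing integers. -/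
def Pcount (n m : ℕ) : ℕ := Fintype.card {π : n.Partition // missingCount π = m}

namespace GapFreeAux


lemma missingCount_eq_zero_iff {n : ℕ} (π : n.Partition) :
    missingCount π = 0 ↔ GF π.parts := by
  rw [missingCount, Finset.card_eq_zero, Finset.filter_eq_empty_iff]
  constructor
  · intro h j hj1 hj2
    by_contra hc
    exact (h (Finset.mem_Ico.2 ⟨hj1, hj2⟩)) hc
  · intro h j hj
    rw [Finset.mem_Ico] at hj
    simpa using h j hj.1 hj.2

/-- conjugation on partitions -/
def conjP {n : ℕ} (π : n.Partition) : n.Partition where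
  parts := conjM π.parts
  parts_pos := fun hi => conjM_pos hi
  parts_sum := by rw [conjM_sum, π.parts_sum]

lemma conjP_conjP {n : ℕ} (π : n.Partition) : conjP (conjP π) = π := by
  ext1
  exact conjM_conjM (fun a ha => π.parts_pos ha)

/-- gap-free partitions are equinumerous with distinct partitions -/
def E1 (n : ℕ) : {π : n.Partition // missingCount π = 0} ≃ {π : n.Partition // π.parts.Nodup} where
  toFun π := ⟨conjP π.1, nodup_conjM ((missingCount_eq_zero_iff _).1 π.2)⟩
  invFun π := ⟨conjP π.1, (missingCount_eq_zero_iff _).2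
    (gf_conjM π.2 (fun a ha => π.1.parts_pos ha))⟩
  left_inv π := by simp [conjP_conjP]
  right_inv π := by simp [conjP_conjP]


lemma part1 (n : ℕ) :
    Fintype.card {π : n.Partition // missingCount π = 0} = (Nat.Partition.distincts n).card := by
  rw [Fintype.card_congr (E1 n), Nat.Partition.distincts, ← Fintype.card_subtype]

lemma hcard (n : ℕ) :
    (Fintype.card {π : n.Partition // missingCount π = 0}) =
      Nat.card {t : Finset ℕ // sigF t = n} := by
  calc Fintype.card {π : n.Partition // missingCount π = 0}
      = Nat.card {π : n.Partition // missingCount π = 0} := Nat.card_eq_fintype_card.symm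
    _ = Nat.card {π : n.Partition // π.parts.Nodup} := Nat.card_congr (E1 n)
    _ = Nat.card {t : Finset ℕ // sigF t = n} := Nat.card_congr (E2 n)

end GapFreeAux

theorem statement1 :
    (∀ n : ℕ, Fintype.card {π : n.Partition // missingCount π = 0} =
        (Nat.Partition.distincts n).card) ∧
    (∀ q : ℂ, ‖q‖ < 1 →
      ∑' n : ℕ, (Fintype.card {π : n.Partition // missingCount π = 0} : ℂ) * q ^ n =
        ∏' k : ℕ, (1 + q ^ (k + 1))) := by
  constructor
  · exact GapFreeAux.part1
  · intro q hq
    calc ∑' n : ℕ, (Fintype.card {π : n.Partition // missingCount π = 0} : ℂ) * q ^ n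
        = ∑' n : ℕ, (Nat.card {t : Finset ℕ // GapFreeAux.sigF t = n} : ℂ) * q ^ n :=
          tsum_congr fun n => by rw [GapFreeAux.hcard n]
      _ = ∑' t : Finset ℕ, q ^ GapFreeAux.sigF t := (GapFreeAux.tsum_eq hq).symm
      _ = ∏' k : ℕ, (1 + q ^ (k + 1)) := ((GapFreeAux.hasProd hq).tprod_eq).symm
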